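/- arXiv:2205.04953 — 2 statements merged into one kernel-verified Lean document; each statement's English description precedes it below -/
import Mathlib

section
/- For every k ≥ 1, every finite path has a consistent (k+1 : k)-colouring with clustering k. -/
open SimpleGraph

/-- The strong product of two simple graphs. -/
def strongProd {α β : Type*} (G : SimpleGraph α) (H : SimpleGraph β) :
    SimpleGraph (α × β) where
  Adj x y := x ≠ y ∧ (x.1 = y.1 ∨ G.Adj x.1 y.1) ∧ (x.2 = y.2 ∨ H.Adj x.2 y.2)
  symm := ⟨fun x y => by
    rintro ⟨h1, h2, h3⟩
    exact ⟨h1.symm, h2.imp Eq.symm (fun h => h.symm), h3.imp Eq.symm (fun h => h.symm)⟩⟩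
  loopless := ⟨fun x => by simp⟩

/-- The strong product of a family of simple graphs. -/
def strongProdPi {d : ℕ} {V : Fin d → Type*} (G : ∀ i, SimpleGraph (V i)) :
    SimpleGraph (∀ i, V i) where
  Adj x y := x ≠ y ∧ ∀ i, x i = y i ∨ (G i).Adj (x i) (y i)
  symm := ⟨fun x y ⟨h1, h2⟩ => ⟨h1.symm, fun i => (h2 i).imp Eq.symm (fun h => h.symm)⟩⟩
  loopless := ⟨fun x => by simp⟩

/-- Every connected component of the subgraph of `G` induced on `S` has at most `c`
vertices. -/
def ClusterBound {α : Type*} (G : SimpleGraph α) (S : Set α) (c : ℕ) : Prop :=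
  ∀ v : S, ((G.induce S).connectedComponentMk v).supp.ncard ≤ c

/-- `G` has a `k`-colouring with clustering `c`. -/
def HasClusteredColoring {α : Type*} (G : SimpleGraph α) (k c : ℕ) : Prop :=
  ∃ f : α → Fin k, ∀ i : Fin k, ClusterBound G {v | f v = i} c

/-- `f` is a `(p:q)`-colouring: each vertex gets a `q`-element subset of `Fin p`. -/
def IsPQColoring {α : Type*} (p q : ℕ) (f : α → Finset (Fin p)) : Prop :=
  ∀ v, (f v).card = q

/-- `f` is a proper `(p:q)`-colouring of `G`. -/
def IsProperPQColoring {α : Type*} (G : SimpleGraph α) (p q : ℕ)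
    (f : α → Finset (Fin p)) : Prop :=
  IsPQColoring p q f ∧ ∀ ⦃x y⦄, G.Adj x y → Disjoint (f x) (f y)

/-- The set-colouring `f` has clustering `c`: for each colour, each monochromatic
component has at most `c` vertices. -/
def PQClusterBound {α : Type*} (G : SimpleGraph α) {p : ℕ}
    (f : α → Finset (Fin p)) (c : ℕ) : Prop :=
  ∀ i : Fin p, ClusterBound G {v | i ∈ f v} c

/-- `G` has a `(p:q)`-colouring with clustering `c`. -/
def HasPQClusteredColoring {α : Type*} (G : SimpleGraph α) (p q c : ℕ) : Prop :=
  ∃ f : α → Finset (Fin p), IsPQColoring p q f ∧ PQClusterBound G f c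

/-- `ord` is a consistent `(p:q)`-colouring of `G` (each vertex's `q` colours are ordered,
with the `i`-th colour of `x` different from the `j`-th colour of `y` for every edge `xy`
and all distinct `i, j`). -/
def IsConsistentPQColoring {α : Type*} (G : SimpleGraph α) (p q : ℕ)
    (ord : α → Fin q → Fin p) : Prop :=
  (∀ v, Function.Injective (ord v)) ∧
    ∀ ⦃x y⦄, G.Adj x y → ∀ i j : Fin q, i ≠ j → ord x i ≠ ord y j

/-- The colour set of a vertex in an ordered colouring. -/
def ordColors {α : Type*} {p q : ℕ} (ord : α → Fin q → Fin p) (v : α) : Finset (Fin p) :=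
  Finset.image (ord v) Finset.univ

/-- `G` has a consistent `(p:q)`-colouring with clustering `c`. -/
def HasConsistentClusteredColoring {α : Type*} (G : SimpleGraph α) (p q c : ℕ) : Prop :=
  ∃ ord : α → Fin q → Fin p, IsConsistentPQColoring G p q ord ∧
    PQClusterBound G (ordColors ord) c

/-- The fractional chromatic number of `G`: the infimum of `p/q` over proper
`(p:q)`-colourings of `G`. -/
noncomputable def fracChrom {α : Type*} (G : SimpleGraph α) : ℝ :=
  sInf {t : ℝ | ∃ p q : ℕ, 0 < q ∧
    (∃ f : α → Finset (Fin p), IsProperPQColoring G p q f) ∧ t = (p : ℝ) / q}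

/-- The independence number of `G`. -/
noncomputable def indepNum {α : Type*} (G : SimpleGraph α) : ℕ :=
  sSup {n | ∃ s : Finset α, (∀ x ∈ s, ∀ y ∈ s, ¬ G.Adj x y) ∧ s.card = n}

open Fin.NatCast

/-- The ordered colouring of the path: vertex `v` gets all colours except `v mod (k+1)`;
at each step the returning colour takes the slot of the departing colour. -/
def myOrd (k : ℕ) : ℕ → Fin k → Fin (k + 1)
  | 0 => fun i => i.succ
  | v + 1 => fun j =>
      if myOrd k v j = (((v + 1 : ℕ)) : Fin (k + 1)) then ((v : ℕ) : Fin (k + 1))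
      else myOrd k v j

lemma castNe (k : ℕ) (hk : 1 ≤ k) (v : ℕ) :
    ((v : ℕ) : Fin (k + 1)) ≠ (((v + 1 : ℕ)) : Fin (k + 1)) := by
  intro h
  have h' : v % (k + 1) = (v + 1) % (k + 1) := by
    have := congrArg Fin.val h
    rwa [Fin.val_natCast, Fin.val_natCast] at this
  have hd : (k + 1) ∣ (v + 1) - v := (Nat.modEq_iff_dvd' (Nat.le_succ v)).mp h'
  have := Nat.le_of_dvd (by omega) hd
  omega

lemma myOrd_ne (k : ℕ) (hk : 1 ≤ k) : ∀ v j, myOrd k v j ≠ ((v : ℕ) : Fin (k + 1)) := by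
  intro v
  induction v with
  | zero =>
    intro j
    simp only [myOrd, Nat.cast_zero]
    exact Fin.succ_ne_zero j
  | succ v ih =>
    intro j
    simp only [myOrd]
    split_ifs with hc
    · exact fun h => castNe k hk v h
    · exact hc

lemma myOrd_inj (k : ℕ) (hk : 1 ≤ k) : ∀ v, Function.Injective (myOrd k v) := by
  intro v
  induction v with
  | zero =>
    intro a b h
    simpa [myOrd] using h
  | succ v ih =>
    intro a b h
    simp only [myOrd] at h
    split_ifs at h with h1 h2 h2
    · exact ih (h1.trans h2.symm)
    · exact absurd h.symm (myOrd_ne k hk v b)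
    · exact absurd h (myOrd_ne k hk v a)
    · exact ih h

lemma myOrd_step (k : ℕ) (hk : 1 ≤ k) (v : ℕ) (i j : Fin k)
    (h : myOrd k v i = myOrd k (v + 1) j) : i = j := by
  simp only [myOrd] at h
  split_ifs at h with hc
  · exact absurd h (myOrd_ne k hk v i)
  · exact myOrd_inj k hk v h

lemma myOrd_surj (k : ℕ) (hk : 1 ≤ k) (v : ℕ) (c : Fin (k + 1))
    (hc : c ≠ ((v : ℕ) : Fin (k + 1))) : ∃ j, myOrd k v j = c := by
  have himg : (Finset.univ.image (myOrd k v)) = Finset.univ.erase ((v : ℕ) : Fin (k + 1)) := by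
    apply Finset.eq_of_subset_of_card_le
    · intro x hx
      simp only [Finset.mem_image, Finset.mem_univ, true_and] at hx
      obtain ⟨j, hj⟩ := hx
      simp only [Finset.mem_erase, Finset.mem_univ, and_true]
      exact hj ▸ myOrd_ne k hk v j
    · rw [Finset.card_erase_of_mem (Finset.mem_univ _),
        Finset.card_image_of_injective _ (myOrd_inj k hk v)]
      simp
  have hcmem : c ∈ Finset.univ.erase ((v : ℕ) : Fin (k + 1)) := by
    simp [hc]
  rw [← himg] at hcmem
  simpa using hcmem

lemma rem_eq_b (k b u : ℕ) (hb : b ≤ k) (h : (u + (k - b)) % (k + 1) = k) :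
    u % (k + 1) = b := by
  have hm : u + (k - b) ≡ k [MOD k + 1] := by
    unfold Nat.ModEq
    rw [h, Nat.mod_eq_of_lt (by omega)]
  have hm2 : u + (k - b) + (b + 1) ≡ k + (b + 1) [MOD k + 1] := hm.add_right _
  have e1 : u + (k - b) + (b + 1) = u + (k + 1) := by omega
  have e2 : k + (b + 1) = b + (k + 1) := by omega
  rw [e1, e2] at hm2
  have hm3 : u ≡ b [MOD k + 1] := hm2.add_right_cancel' _
  unfold Nat.ModEq at hm3
  rw [hm3, Nat.mod_eq_of_lt (by omega)]

lemma dvd_eq_b (k b u : ℕ) (hb : b ≤ k) (h : (k + 1) ∣ (u + (k - b) + 1)) :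
    u % (k + 1) = b := by
  have hm : u + (k - b) + 1 ≡ 0 [MOD k + 1] := (Nat.modEq_zero_iff_dvd).mpr h
  have hm2 : u + (k - b) + 1 + b ≡ 0 + b [MOD k + 1] := hm.add_right _
  have e1 : u + (k - b) + 1 + b = u + (k + 1) := by omega
  rw [e1] at hm2
  have hm3 : u + (k + 1) ≡ b + (k + 1) [MOD k + 1] := by
    calc u + (k + 1) ≡ 0 + b [MOD k + 1] := hm2
    _ ≡ b + (k + 1) [MOD k + 1] := by
        unfold Nat.ModEq
        simp [Nat.add_mod_right]
  have hm4 : u ≡ b [MOD k + 1] := hm3.add_right_cancel' _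
  unfold Nat.ModEq at hm4
  rw [hm4, Nat.mod_eq_of_lt (by omega)]

lemma div_step (k b u : ℕ) (hb : b ≤ k) (hu : u % (k + 1) ≠ b) :
    (u + 1 + (k - b)) / (k + 1) = (u + (k - b)) / (k + 1) := by
  have e : u + 1 + (k - b) = (u + (k - b)) + 1 := by omega
  rw [e, Nat.succ_div, if_neg, add_zero]
  intro hdvd
  exact hu (dvd_eq_b k b u hb hdvd)

lemma rem_ne_k (k b u : ℕ) (hb : b ≤ k) (hu : u % (k + 1) ≠ b) :
    (u + (k - b)) % (k + 1) ≠ k :=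
  fun h => hu (rem_eq_b k b u hb h)

theorem stmt12 (n k : ℕ) (hk : 1 ≤ k) :
    HasConsistentClusteredColoring (SimpleGraph.pathGraph n) (k + 1) k k := by
  refine ⟨fun v => myOrd k v.val, ⟨fun v => myOrd_inj k hk v.val, ?_⟩, ?_⟩
  · intro x y hxy i j hij heq
    rw [SimpleGraph.pathGraph_adj] at hxy
    simp only at heq
    rcases hxy with h | h
    · apply hij
      have h' : (y : Fin n).val = x.val + 1 := h.symm
      rw [h'] at heq
      exact myOrd_step k hk x.val i j heq
    · apply hij
      have h' : (x : Fin n).val = y.val + 1 := h.symm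
      rw [h'] at heq
      exact (myOrd_step k hk y.val j i heq.symm).symm
  · intro c
    set b := c.val with hbdef
    have hb : b ≤ k := by have := c.isLt; omega
    set S := {w : Fin n | c ∈ ordColors (fun v : Fin n => myOrd k v.val) w} with hS
    have hmem : ∀ w : Fin n, w ∈ S ↔ w.val % (k + 1) ≠ b := by
      intro w
      constructor
      · intro hw hcon
        simp only [hS, Set.mem_setOf_eq, ordColors, Finset.mem_image, Finset.mem_univ,
          true_and] at hw
        obtain ⟨j, hj⟩ := hw
        apply myOrd_ne k hk w.val j
        rw [hj]
        apply Fin.ext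
        rw [Fin.val_natCast]
        exact hcon.symm
      · intro hw
        have hc : c ≠ ((w.val : ℕ) : Fin (k + 1)) := by
          intro h
          apply hw
          have := congrArg Fin.val h
          rw [Fin.val_natCast] at this
          exact this.symm
        obtain ⟨j, hj⟩ := myOrd_surj k hk w.val c hc
        simp only [hS, Set.mem_setOf_eq, ordColors, Finset.mem_image]
        exact ⟨j, Finset.mem_univ _, hj⟩
    intro v
    -- quotient invariant along walks
    have hadj_step : ∀ u w : S, ((SimpleGraph.pathGraph n).induce S).Adj u w →
        (u.val.val + (k - b)) / (k + 1) = (w.val.val + (k - b)) / (k + 1) := by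
      intro u w hadj
      have hA : (SimpleGraph.pathGraph n).Adj u.val w.val := hadj
      rw [SimpleGraph.pathGraph_adj] at hA
      have hu := (hmem u.val).mp u.2
      have hw := (hmem w.val).mp w.2
      rcases hA with h | h
      · rw [← h]
        exact (div_step k b u.val.val hb hu).symm
      · rw [← h]
        exact div_step k b w.val.val hb hw
    have hreach : ∀ u w : S, ((SimpleGraph.pathGraph n).induce S).Reachable u w →
        (u.val.val + (k - b)) / (k + 1) = (w.val.val + (k - b)) / (k + 1) := by
      intro u w h
      obtain ⟨p⟩ := h
      induction p with
      | nil => rfl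
      | cons hadj p ih => exact (hadj_step _ _ hadj).trans ih
    set T := (((SimpleGraph.pathGraph n).induce S).connectedComponentMk v).supp with hT
    have hf : ∀ w : S, (w.val.val + (k - b)) % (k + 1) < k := by
      intro w
      have h1 := (hmem w.val).mp w.2
      have h2 := rem_ne_k k b w.val.val hb h1
      have h3 : (w.val.val + (k - b)) % (k + 1) < k + 1 := Nat.mod_lt _ (by omega)
      omega
    set f : S → Fin k := fun w => ⟨(w.val.val + (k - b)) % (k + 1), hf w⟩ with hfdef
    have hinj : Set.InjOn f T := by
      intro w1 h1 w2 h2 hfeq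
      have hr1 : ((SimpleGraph.pathGraph n).induce S).Reachable w1 v :=
        SimpleGraph.ConnectedComponent.exact
          ((SimpleGraph.ConnectedComponent.mem_supp_iff _ _).mp h1)
      have hr2 : ((SimpleGraph.pathGraph n).induce S).Reachable w2 v :=
        SimpleGraph.ConnectedComponent.exact
          ((SimpleGraph.ConnectedComponent.mem_supp_iff _ _).mp h2)
      have hq : (w1.val.val + (k - b)) / (k + 1) = (w2.val.val + (k - b)) / (k + 1) :=
        (hreach w1 v hr1).trans (hreach w2 v hr2).symm
      have hrm : (w1.val.val + (k - b)) % (k + 1) = (w2.val.val + (k - b)) % (k + 1) := by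
        have := congrArg Fin.val hfeq
        simpa [hfdef] using this
      have heq : w1.val.val + (k - b) = w2.val.val + (k - b) := by
        rw [← Nat.div_add_mod (w1.val.val + (k - b)) (k + 1),
          ← Nat.div_add_mod (w2.val.val + (k - b)) (k + 1), hq, hrm]
      exact Subtype.ext (Fin.ext (by omega))
    calc T.ncard = (f '' T).ncard := (Set.ncard_image_of_injOn hinj).symm
      _ ≤ (Set.univ : Set (Fin k)).ncard :=
          Set.ncard_le_ncard (Set.subset_univ _) Set.finite_univ
      _ = k := by simp [Set.ncard_univ]
end

section
/- For every d ≥ 1 and n ≥ 1, the d-fold strong product of n-vertex paths ⊠_d P_n has a (d+1)-colouring with clustering d!. -/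
open SimpleGraph

/-! ### Auxiliary construction: skip sequences -/

/-- `skipSeq m t : Fin m → Fin (m+1)` — injections evolving by swaps, skipping `t % (m+1)`. -/
def skipSeq (m : ℕ) : ℕ → Fin m → Fin (m + 1)
  | 0 => fun i => i.succ
  | (t+1) => fun i =>
      if skipSeq m t i = ⟨(t+1) % (m+1), Nat.mod_lt _ (Nat.succ_pos m)⟩
      then ⟨t % (m+1), Nat.mod_lt _ (Nat.succ_pos m)⟩ else skipSeq m t i

lemma mod_succ_ne' {nn : ℕ} (hn : 2 ≤ nn) (t : ℕ) : t % nn ≠ (t+1) % nn := by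
  have h1 : (t + 1) % nn = (t % nn + 1) % nn := by
    conv_lhs => rw [Nat.add_mod, Nat.mod_eq_of_lt (show 1 < nn from hn)]
  have h2 : t % nn < nn := Nat.mod_lt _ (by omega)
  rcases Nat.lt_or_ge (t % nn + 1) nn with h | h
  · rw [h1, Nat.mod_eq_of_lt h]; omega
  · have h3 : t % nn + 1 = nn := by omega
    rw [h1, h3, Nat.mod_self]; omega

lemma skipSeq_val_ne (m t : ℕ) (i : Fin m) : (skipSeq m t i).val ≠ t % (m + 1) := by
  cases t with
  | zero => simp [skipSeq]
  | succ t =>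
    have hm : 2 ≤ m + 1 := by have := i.pos; omega
    simp only [skipSeq]
    split
    · exact fun h => (mod_succ_ne' hm t) h
    · rename_i h
      exact fun hv => h (Fin.ext hv)

lemma skipSeq_injective (m t : ℕ) : Function.Injective (skipSeq m t) := by
  induction t with
  | zero => exact fun i j h => Fin.succ_injective _ h
  | succ t ih =>
    intro i j h
    simp only [skipSeq] at h
    split_ifs at h with h1 h2 h2
    · exact ih (h1.trans h2.symm)
    · exact absurd (congrArg Fin.val h.symm) (skipSeq_val_ne m t j)
    · exact absurd (congrArg Fin.val h) (skipSeq_val_ne m t i)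
    · exact ih h

lemma skipSeq_compat (m t : ℕ) (i j : Fin m)
    (h : skipSeq m t i = skipSeq m (t+1) j) : i = j := by
  simp only [skipSeq] at h
  split_ifs at h with h1
  · exact absurd (congrArg Fin.val h) (skipSeq_val_ne m t i)
  · exact skipSeq_injective m t h

/-- `near a b` : `|a - b| ≤ 1`. -/
def near (a b : ℕ) : Prop := b = a ∨ b = a + 1 ∨ a = b + 1

lemma skipSeq_near {m t t' : ℕ} {i j : Fin m} (hn : near t t')
    (h : skipSeq m t i = skipSeq m t' j) : i = j := by
  rcases hn with rfl | rfl | rfl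
  · exact skipSeq_injective _ _ h
  · exact skipSeq_compat _ _ i j h
  · exact (skipSeq_compat _ _ j i h.symm).symm

/-- The colouring chain. -/
def chainF : (k : ℕ) → (Fin k → ℕ) → Fin (k + 1)
  | 0, _ => 0
  | (k+1), x => skipSeq (k+1) (x 0) (chainF k (Fin.tail x))

/-- The per-coordinate "level output value". -/
def levv : (k : ℕ) → (Fin k → ℕ) → Fin k → ℕ
  | 0, _ => fun i => i.elim0
  | (k+1), x => Fin.cons (chainF (k+1) x).val (levv k (Fin.tail x))

/-- The per-coordinate block index. -/
def blkv : (k : ℕ) → (Fin k → ℕ) → Fin k → ℕ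
  | 0, _ => fun i => i.elim0
  | (k+1), x => Fin.cons ((x 0 + (k + 1 - (chainF (k+1) x).val)) / (k + 2))
      (blkv k (Fin.tail x))

lemma levv_lt : ∀ (k : ℕ) (x : Fin k → ℕ) (i : Fin k), levv k x i < k + 1 - i.val
  | 0, _, i => i.elim0
  | (k+1), x, i => by
    refine Fin.cases ?_ (fun j => ?_) i
    · simpa [levv] using (chainF (k+1) x).isLt
    · have h := levv_lt k (Fin.tail x) j
      simpa [levv, Nat.succ_sub_succ] using h

lemma mod_ne_levv : ∀ (k : ℕ) (x : Fin k → ℕ) (i : Fin k),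
    x i % (k + 1 - i.val) ≠ levv k x i
  | 0, _, i => i.elim0
  | (k+1), x, i => by
    refine Fin.cases ?_ (fun j => ?_) i
    · have h := skipSeq_val_ne (k+1) (x 0) (chainF k (Fin.tail x))
      simp only [levv, chainF, Fin.cons_zero, Fin.val_zero, Nat.sub_zero]
      exact fun hv => h hv.symm
    · have h := mod_ne_levv k (Fin.tail x) j
      simpa [levv, Fin.tail, Nat.succ_sub_succ] using h

lemma blkv_eq_div : ∀ (k : ℕ) (x : Fin k → ℕ) (i : Fin k),
    blkv k x i = (x i + (k - i.val - levv k x i)) / (k + 1 - i.val)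
  | 0, _, i => i.elim0
  | (k+1), x, i => by
    refine Fin.cases ?_ (fun j => ?_) i
    · simp [blkv, levv]
    · have h := blkv_eq_div k (Fin.tail x) j
      simpa [blkv, levv, Fin.tail, Nat.succ_sub_succ] using h

/-- Key arithmetic: stepping by one within a block. -/
lemma block_step {nn r a : ℕ} (hr : r < nn) (ha : a % nn ≠ r) :
    (a + (nn - 1 - r) + 1) / nn = (a + (nn - 1 - r)) / nn := by
  have hn : 0 < nn := by omega
  have hkey : ¬ nn ∣ (a + (nn - 1 - r) + 1) := by
    intro hdvd
    have h1 : a + (nn - 1 - r) + 1 = a + (nn - r) := by omega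
    rw [h1] at hdvd
    obtain ⟨e, he⟩ := hdvd
    have hmod : (a + (nn - r)) % nn = 0 := by rw [he]; exact Nat.mul_mod_right nn e
    rw [Nat.add_mod] at hmod
    have hs : a % nn < nn := Nat.mod_lt _ hn
    rcases Nat.eq_zero_or_pos r with rfl | hrpos
    · rw [Nat.sub_zero, Nat.mod_self, Nat.add_zero, Nat.mod_eq_of_lt hs] at hmod
      exact ha hmod
    · have h2 : (nn - r) % nn = nn - r := Nat.mod_eq_of_lt (by omega)
      rw [h2] at hmod
      rcases Nat.lt_or_ge (a % nn + (nn - r)) nn with h3 | h3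
      · rw [Nat.mod_eq_of_lt h3] at hmod; omega
      · rw [Nat.mod_eq_sub_mod h3, Nat.mod_eq_of_lt (by omega)] at hmod; omega
  rw [Nat.succ_div, if_neg hkey, Nat.add_zero]

/-- Blocks agree for near values avoiding the forbidden residue. -/
lemma block_eq {nn r a b : ℕ} (hr : r < nn) (ha : a % nn ≠ r) (hb : b % nn ≠ r)
    (hab : near a b) :
    (a + (nn - 1 - r)) / nn = (b + (nn - 1 - r)) / nn := by
  rcases hab with rfl | rfl | rfl
  · rfl
  · rw [Nat.add_right_comm a 1]
    exact (block_step hr ha).symm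
  · rw [Nat.add_right_comm b 1]
    exact block_step hr hb

/-- Main invariant: a monochromatic king-move preserves all level and block data. -/
lemma main_inv : ∀ (k : ℕ) (x y : Fin k → ℕ), (∀ i, near (x i) (y i)) →
    chainF k x = chainF k y → levv k x = levv k y ∧ blkv k x = blkv k y := by
  intro k
  induction k with
  | zero => exact fun x y _ _ => ⟨funext fun i => i.elim0, funext fun i => i.elim0⟩
  | succ k ih =>
    intro x y hnear hc
    have hc' : skipSeq (k+1) (x 0) (chainF k (Fin.tail x))
        = skipSeq (k+1) (y 0) (chainF k (Fin.tail y)) := hc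
    have htl : chainF k (Fin.tail x) = chainF k (Fin.tail y) :=
      skipSeq_near (hnear 0) hc'
    obtain ⟨hl, hb⟩ := ih (Fin.tail x) (Fin.tail y) (fun j => hnear j.succ) htl
    constructor
    · funext i
      refine Fin.cases ?_ (fun j => ?_) i
      · simp only [levv, Fin.cons_zero, hc]
      · simp only [levv, Fin.cons_succ, hl]
    · funext i
      refine Fin.cases ?_ (fun j => ?_) i
      · simp only [blkv, Fin.cons_zero]
        have hrlt : (chainF (k+1) x).val < k + 2 := (chainF (k+1) x).isLt
        have hax : x 0 % (k + 2) ≠ (chainF (k+1) x).val :=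
          fun hv => skipSeq_val_ne (k+1) (x 0) (chainF k (Fin.tail x)) hv.symm
        have hay : y 0 % (k + 2) ≠ (chainF (k+1) x).val := by
          rw [hc]
          exact fun hv => skipSeq_val_ne (k+1) (y 0) (chainF k (Fin.tail y)) hv.symm
        have := block_eq (nn := k + 2) (r := (chainF (k+1) x).val)
          hrlt hax hay (hnear 0)
        have harith : k + 2 - 1 - (chainF (k+1) x).val
            = k + 1 - (chainF (k+1) x).val := by omega
        rw [harith] at this
        rw [hc] at this ⊢
        exact this
      · simp only [blkv, Fin.cons_succ, hb]

/-- The key component bound. -/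
lemma aux_bound (d n : ℕ) (col : Fin (d + 1)) (S : Set (Fin d → Fin n))
    (hS : ∀ w ∈ S, chainF d (fun i => ((w i : ℕ))) = col)
    (v : ↥S) :
    ((((strongProdPi (fun _ : Fin d => SimpleGraph.pathGraph n))).induce
      S).connectedComponentMk v).supp.ncard ≤ Nat.factorial d := by
  classical
  set Gr := strongProdPi (fun _ : Fin d => SimpleGraph.pathGraph n) with hGr
  set ex : ↥S → (Fin d → ℕ) := fun a i => ((a : Fin d → Fin n) i : ℕ) with hex
  have edge_inv : ∀ a b : ↥S, (Gr.induce S).Adj a b →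
      levv d (ex a) = levv d (ex b) ∧ blkv d (ex a) = blkv d (ex b) := by
    intro a b hab
    have hadj : Gr.Adj a.val b.val := hab
    obtain ⟨hne, hcoord⟩ : a.val ≠ b.val ∧ ∀ i, a.val i = b.val i ∨
        (SimpleGraph.pathGraph n).Adj (a.val i) (b.val i) := hadj
    have hnear : ∀ i, near (ex a i) (ex b i) := by
      intro i
      rcases hcoord i with h | h
      · exact Or.inl (congrArg Fin.val h).symm
      · rcases (SimpleGraph.pathGraph_adj).mp h with h' | h'
        · exact Or.inr (Or.inl h'.symm)
        · exact Or.inr (Or.inr h'.symm)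
    have hc : chainF d (ex a) = chainF d (ex b) :=
      (hS _ a.2).trans (hS _ b.2).symm
    exact main_inv d _ _ hnear hc
  have reach_inv : ∀ a b : ↥S, (Gr.induce S).Reachable a b →
      levv d (ex a) = levv d (ex b) ∧ blkv d (ex a) = blkv d (ex b) := by
    intro a b h
    obtain ⟨p⟩ := h
    induction p with
    | nil => exact ⟨rfl, rfl⟩
    | cons h q ih =>
      obtain ⟨h1, h2⟩ := edge_inv _ _ h
      exact ⟨h1.trans ih.1, h2.trans ih.2⟩
  set K := (Gr.induce S).connectedComponentMk v with hK
  have hsupp : ∀ w ∈ K.supp,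
      levv d (ex w) = levv d (ex v) ∧ blkv d (ex w) = blkv d (ex v) := by
    intro w hw
    rw [SimpleGraph.ConnectedComponent.mem_supp_iff] at hw
    exact reach_inv w v (SimpleGraph.ConnectedComponent.exact hw)
  set F : ↥S → (Fin d → ℕ) := fun w i =>
    ex w i + (d - i.val - levv d (ex v) i) - blkv d (ex v) i * (d + 1 - i.val) with hF
  have key : ∀ w ∈ K.supp, ∀ i : Fin d, ∃ P : ℕ,
      blkv d (ex v) i * (d + 1 - i.val) = P ∧
      P ≤ ex w i + (d - i.val - levv d (ex v) i) ∧
      ex w i + (d - i.val - levv d (ex v) i) < P + (d - i.val) := by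
    intro w hw i
    obtain ⟨hl, hb⟩ := hsupp w hw
    have hr : levv d (ex v) i < d + 1 - i.val := levv_lt d (ex v) i
    have hmod : ex w i % (d + 1 - i.val) ≠ levv d (ex v) i := by
      have h := mod_ne_levv d (ex w) i; rwa [hl] at h
    have hdiv : blkv d (ex v) i
        = (ex w i + (d - i.val - levv d (ex v) i)) / (d + 1 - i.val) := by
      have h := blkv_eq_div d (ex w) i; rw [hl, hb] at h; exact h
    have hiv : i.val < d := i.isLt
    have hle : blkv d (ex v) i * (d + 1 - i.val)
        ≤ ex w i + (d - i.val - levv d (ex v) i) := by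
      rw [hdiv]; exact Nat.div_mul_le_self _ _
    have hlt : ex w i + (d - i.val - levv d (ex v) i)
        < blkv d (ex v) i * (d + 1 - i.val) + (d + 1 - i.val) := by
      rw [hdiv]; exact Nat.lt_div_mul_add (by omega)
    refine ⟨blkv d (ex v) i * (d + 1 - i.val), rfl, hle, ?_⟩
    generalize hP : blkv d (ex v) i * (d + 1 - i.val) = P at hle hlt
    by_contra hcon
    push_neg at hcon
    have ht' : ex w i = P + levv d (ex v) i := by omega
    have ht : ex w i = blkv d (ex v) i * (d + 1 - i.val) + levv d (ex v) i := by
      rw [hP]; exact ht'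
    have hbad : ex w i % (d + 1 - i.val) = levv d (ex v) i := by
      rw [ht, Nat.mul_add_mod', Nat.mod_eq_of_lt hr]
    exact hmod hbad
  set T : Set (Fin d → ℕ)
      := ↑(Fintype.piFinset (fun i : Fin d => Finset.range (d - i.val))) with hT
  have hmem : ∀ w ∈ K.supp, F w ∈ T := by
    intro w hw
    rw [hT, Finset.mem_coe, Fintype.mem_piFinset]
    intro i
    rw [Finset.mem_range]
    obtain ⟨P, hP, h1, h2⟩ := key w hw i
    simp only [hF]
    rw [hP]
    omega
  have hinj : Set.InjOn F K.supp := by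
    intro w hw w' hw' heq
    refine Subtype.ext (funext fun i => Fin.val_injective ?_)
    obtain ⟨P, hP, h1, h2⟩ := key w hw i
    obtain ⟨P', hP', h1', h2'⟩ := key w' hw' i
    have hPP : P' = P := hP'.symm.trans hP
    subst hPP
    have hFi := congrFun heq i
    simp only [hF] at hFi
    rw [hP] at hFi
    show ex w i = ex w' i
    omega
  have hfin : T.Finite := by rw [hT]; exact Finset.finite_toSet _
  have hle := Set.ncard_le_ncard_of_injOn F hmem hinj hfin
  rw [hT, Set.ncard_coe_finset, Fintype.card_piFinset] at hle
  simp only [Finset.card_range] at hle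
  refine hle.trans ?_
  rw [Fin.prod_univ_eq_prod_range (fun j => d - j) d]
  rw [show (∏ j ∈ Finset.range d, (d - j))
      = ∏ j ∈ Finset.range d, ((fun j => j + 1) (d - 1 - j)) from
    Finset.prod_congr rfl (fun j hj => by
      rw [Finset.mem_range] at hj; simp; omega)]
  rw [Finset.prod_range_reflect (fun j => j + 1) d]
  exact le_of_eq (Finset.prod_range_add_one_eq_factorial d)

theorem stmt15 (d n : ℕ) (hd : 1 ≤ d) (hn : 1 ≤ n) :
    HasClusteredColoring
      (strongProdPi (fun _ : Fin d => SimpleGraph.pathGraph n)) (d + 1)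
      (Nat.factorial d) := by
  refine ⟨fun v => chainF d (fun i => ((v i : ℕ))), fun col => ?_⟩
  intro v
  exact aux_bound d n col _ (fun w hw => hw) v
end
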